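/- arXiv:2604.22392 — 3 statements merged into one kernel-verified Lean document; each statement's English description precedes it below -/
import Mathlib

section
/- Let (t*, W*_1, …, W*_K, W*_S) be an optimal solution of problem (P2-R). For each k define W̄*_k = (W*_k h_k h_kᴴ W*_k)/(h_kᴴ W*_k h_k) (well-defined since feasibility forces h_kᴴ W*_k h_k ≥ γ_k σ_k² > 0), and define W̄*_S = W*_S + Σ_{k=1}^K (W*_k − W̄*_k). Then (t*, W̄*_1, …, W̄*_K, W̄*_S) is also an optimal solution of problem (P2-R), and each W̄*_k has rank at most 1. -/
open Matrix ComplexOrder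

section Aux
variable {N : ℕ}

lemma sum_mulVec' {m : Type*} (s : Finset m) (W : m → Matrix (Fin N) (Fin N) ℂ)
    (x : Fin N → ℂ) : (∑ i ∈ s, W i) *ᵥ x = ∑ i ∈ s, (W i *ᵥ x) := by
  classical
  induction s using Finset.induction with
  | empty => simp
  | insert _ _ h ih => rw [Finset.sum_insert h, Finset.sum_insert h, add_mulVec, ih]

lemma dotProduct_sum' {m : Type*} (s : Finset m) (u : Fin N → ℂ) (f : m → Fin N → ℂ) :
    u ⬝ᵥ (∑ i ∈ s, f i) = ∑ i ∈ s, u ⬝ᵥ f i := by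
  classical
  induction s using Finset.induction with
  | empty => simp
  | insert _ _ h ih => rw [Finset.sum_insert h, Finset.sum_insert h, dotProduct_add, ih]

lemma vecMulVec_mulVec' (u v x : Fin N → ℂ) :
    vecMulVec u v *ᵥ x = (v ⬝ᵥ x) • u := by
  ext i
  simp [vecMulVec, Matrix.mulVec, dotProduct, Finset.sum_mul, mul_assoc, mul_comm,
    mul_left_comm, ← Finset.mul_sum]

lemma quad_eq (W : Matrix (Fin N) (Fin N) ℂ) (hW : W.IsHermitian) (h x : Fin N → ℂ) :
    star x ⬝ᵥ (((star h ⬝ᵥ (W *ᵥ h))⁻¹ • vecMulVec (W *ᵥ h) (star h ᵥ* W)) *ᵥ x)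
      = (star h ⬝ᵥ (W *ᵥ h))⁻¹ * ((star h ⬝ᵥ (W *ᵥ x)) * star (star h ⬝ᵥ (W *ᵥ x))) := by
  have h2 : (star h ᵥ* W) ⬝ᵥ x = star h ⬝ᵥ (W *ᵥ x) := (dotProduct_mulVec _ _ _).symm
  have h3 : star x ⬝ᵥ (W *ᵥ h) = star (star h ⬝ᵥ (W *ᵥ x)) := by
    rw [star_dotProduct, star_mulVec, dotProduct_mulVec, hW.eq]
  rw [smul_mulVec, dotProduct_smul, vecMulVec_mulVec', dotProduct_smul, h2, h3,
    smul_eq_mul, smul_eq_mul]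

lemma vecMulVec_conjT (u v : Fin N → ℂ) :
    (vecMulVec u v)ᴴ = vecMulVec (star v) (star u) := by
  ext i j
  simp [vecMulVec_apply, conjTranspose_apply, mul_comm]

lemma wbar_psd (W : Matrix (Fin N) (Fin N) ℂ) (hW : W.PosSemidef) (h : Fin N → ℂ)
    (hc : 0 ≤ star h ⬝ᵥ (W *ᵥ h)) :
    ((star h ⬝ᵥ (W *ᵥ h))⁻¹ • vecMulVec (W *ᵥ h) (star h ᵥ* W)).PosSemidef := by
  set c := star h ⬝ᵥ (W *ᵥ h) with hcdef
  have him : c.im = 0 := (Complex.nonneg_iff.mp hc).2.symm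
  have hcre : c = ((c.re : ℝ) : ℂ) := by
    exact (Complex.ext (by simp) (by simp [him])).symm
  have hre_nonneg : 0 ≤ c.re := (Complex.nonneg_iff.mp hc).1
  have e1 : star (star h ᵥ* W) = W *ᵥ h := by
    rw [star_vecMul, star_star, hW.1]
  have e2 : star (W *ᵥ h) = star h ᵥ* W := by
    rw [star_mulVec, hW.1]
  refine Matrix.PosSemidef.of_dotProduct_mulVec_nonneg ?_ ?_
  · have hstarc : star c⁻¹ = c⁻¹ := by
      rw [hcre]; simp [← Complex.ofReal_inv]
    unfold Matrix.IsHermitian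
    rw [conjTranspose_smul, hstarc, vecMulVec_conjT, e1, e2]
  · intro x
    rw [quad_eq W hW.1 h x]
    set a := star h ⬝ᵥ (W *ᵥ x)
    have ha : a * star a = ((Complex.normSq a : ℝ) : ℂ) := by
      rw [Complex.star_def, Complex.mul_conj]
    rw [ha, ← hcdef, hcre, ← Complex.ofReal_inv, ← Complex.ofReal_mul, Complex.zero_le_real]
    exact mul_nonneg (inv_nonneg.mpr hre_nonneg) (Complex.normSq_nonneg a)

lemma diff_psd (W : Matrix (Fin N) (Fin N) ℂ) (hW : W.PosSemidef) (h : Fin N → ℂ)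
    (hc0 : 0 ≤ star h ⬝ᵥ (W *ᵥ h)) (hcne : star h ⬝ᵥ (W *ᵥ h) ≠ 0) :
    (W - (star h ⬝ᵥ (W *ᵥ h))⁻¹ • vecMulVec (W *ᵥ h) (star h ᵥ* W)).PosSemidef := by
  set c := star h ⬝ᵥ (W *ᵥ h) with hcdef
  have hstarc : star c = c := by
    have him : c.im = 0 := (Complex.nonneg_iff.mp hc0).2.symm
    exact Complex.ext (by simp) (by simp [him])
  refine .of_dotProduct_mulVec_nonneg (hW.1.sub (wbar_psd W hW h hc0).1) fun x => ?_
  rw [sub_mulVec, dotProduct_sub, quad_eq W hW.1 h x]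
  set a := star h ⬝ᵥ (W *ᵥ x) with hadef
  set b := star x ⬝ᵥ (W *ᵥ x) with hbdef
  have h4 : star x ⬝ᵥ (W *ᵥ h) = star a := by
    rw [hadef, star_dotProduct, star_mulVec, dotProduct_mulVec, hW.1.eq]
  have key : star (x - (a / c) • h) ⬝ᵥ (W *ᵥ (x - (a / c) • h))
      = b - c⁻¹ * (a * star a) := by
    rw [mulVec_sub, mulVec_smul, star_sub, star_smul, sub_dotProduct, dotProduct_sub,
      dotProduct_sub, smul_dotProduct, smul_dotProduct, dotProduct_smul, dotProduct_smul,
      smul_eq_mul, smul_eq_mul, smul_eq_mul, smul_eq_mul, h4, ← hadef, ← hbdef, ← hcdef,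
      star_div₀, hstarc]
    field_simp
    ring
  have := hW.dotProduct_mulVec_nonneg (x - (a / c) • h)
  rw [key] at this
  exact this

lemma rank_smul_vecMulVec (c : ℂ) (u v : Fin N → ℂ) :
    ((c • vecMulVec u v) : Matrix (Fin N) (Fin N) ℂ).rank ≤ 1 := by
  have e : c • vecMulVec u v = vecMulVec (c • u) v := by
    ext i j
    simp [vecMulVec_apply, smul_eq_mul, mul_assoc]
  rw [e, vecMulVec_eq (Fin 1)]
  exact (rank_mul_le_right _ _).trans (by simpa using rank_le_card_height (replicateRow (Fin 1) v))

lemma psd_sum {m : Type*} (s : Finset m) (f : m → Matrix (Fin N) (Fin N) ℂ)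
    (hf : ∀ i ∈ s, (f i).PosSemidef) : (∑ i ∈ s, f i).PosSemidef := by
  classical
  induction s using Finset.induction with
  | empty => simpa using Matrix.PosSemidef.zero
  | @insert j s hj ih =>
    rw [Finset.sum_insert hj]
    exact (hf j (Finset.mem_insert_self j s)).add
      (ih fun i hi => hf i (Finset.mem_insert_of_mem hi))

end Aux

/-- The 2×2 matrix `B(t, R)` from problem (P2-R). -/
noncomputable def Bmat {N : ℕ} (A1 A2 A3 : Matrix (Fin N) (Fin N) ℂ)
    (t : ℝ) (R : Matrix (Fin N) (Fin N) ℂ) : Matrix (Fin 2) (Fin 2) ℂ :=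
  !![(A1 * R).trace - (t : ℂ), (A2 * R).trace;
     (A2ᴴ * R).trace, (A3 * R).trace]

/-- Feasibility of a tuple `(t, W_1, …, W_K, W_S)` for problem (P2-R). -/
def Feasible {N K : ℕ} (A1 A2 A3 : Matrix (Fin N) (Fin N) ℂ)
    (h : Fin K → Fin N → ℂ) (γ σsq : Fin K → ℝ) (P : ℝ)
    (t : ℝ) (W : Fin K → Matrix (Fin N) (Fin N) ℂ)
    (WS : Matrix (Fin N) (Fin N) ℂ) : Prop :=
  (∀ k, (W k).PosSemidef) ∧ WS.PosSemidef ∧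
  (Bmat A1 A2 A3 t ((∑ k, W k) + WS)).PosSemidef ∧
  (∀ k, ((γ k * σsq k : ℝ) : ℂ) ≤
      star (h k) ⬝ᵥ ((W k - ((γ k : ℝ) : ℂ) • ∑ i ∈ Finset.univ.erase k, W i) *ᵥ h k)) ∧
  ((∑ k, W k) + WS).trace ≤ (P : ℂ)

/-- Optimality of a tuple for problem (P2-R). -/
def Optimal {N K : ℕ} (A1 A2 A3 : Matrix (Fin N) (Fin N) ℂ)
    (h : Fin K → Fin N → ℂ) (γ σsq : Fin K → ℝ) (P : ℝ)
    (t : ℝ) (W : Fin K → Matrix (Fin N) (Fin N) ℂ)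
    (WS : Matrix (Fin N) (Fin N) ℂ) : Prop :=
  Feasible A1 A2 A3 h γ σsq P t W WS ∧
  ∀ (t' : ℝ) (W' : Fin K → Matrix (Fin N) (Fin N) ℂ) (WS' : Matrix (Fin N) (Fin N) ℂ),
    Feasible A1 A2 A3 h γ σsq P t' W' WS' → t' ≤ t

/-- Proposition 1: given any optimal solution `(t*, {W*_k}, W*_S)` of (P2-R), the tuple
`(t*, {W̄*_k}, W̄*_S)` with `W̄*_k = W*_k h_k h_kᴴ W*_k / (h_kᴴ W*_k h_k)` and
`W̄*_S = W*_S + ∑_k (W*_k − W̄*_k)` is also optimal, and each `W̄*_k` has rank at most 1. -/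
theorem stmt0 {N K : ℕ} (A1 A2 A3 : Matrix (Fin N) (Fin N) ℂ)
    (hA1 : A1.IsHermitian) (hA3 : A3.IsHermitian)
    (h : Fin K → Fin N → ℂ) (γ σsq : Fin K → ℝ)
    (hγ : ∀ k, 0 < γ k) (hσ : ∀ k, 0 < σsq k) (P : ℝ) (hP : 0 < P)
    (t : ℝ) (W : Fin K → Matrix (Fin N) (Fin N) ℂ) (WS : Matrix (Fin N) (Fin N) ℂ)
    (hopt : Optimal A1 A2 A3 h γ σsq P t W WS)
    (Wbar : Fin K → Matrix (Fin N) (Fin N) ℂ)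
    (hWbar : ∀ k, Wbar k =
      (star (h k) ⬝ᵥ (W k *ᵥ h k))⁻¹ • vecMulVec (W k *ᵥ h k) (star (h k) ᵥ* W k))
    (WbarS : Matrix (Fin N) (Fin N) ℂ)
    (hWbarS : WbarS = WS + ∑ k, (W k - Wbar k)) :
    Optimal A1 A2 A3 h γ σsq P t Wbar WbarS ∧ ∀ k, (Wbar k).rank ≤ 1 := by
  obtain ⟨⟨hWk, hWS, hB, hSINR, htr⟩, hopt2⟩ := hopt
  -- notation
  set c : Fin K → ℂ := fun k => star (h k) ⬝ᵥ (W k *ᵥ h k) with hc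
  set q : Fin K → ℂ :=
    fun k => star (h k) ⬝ᵥ ((∑ i ∈ Finset.univ.erase k, W i) *ᵥ h k) with hq
  have hq_nonneg : ∀ k, 0 ≤ q k := by
    intro k
    rw [hq]
    simp only
    rw [sum_mulVec', dotProduct_sum']
    exact Finset.sum_nonneg fun i _ => (hWk i).dotProduct_mulVec_nonneg _
  have hSINR' : ∀ k, ((γ k * σsq k : ℝ) : ℂ) ≤ c k - ((γ k : ℝ) : ℂ) * q k := by
    intro k
    have e : star (h k) ⬝ᵥ ((W k - ((γ k : ℝ) : ℂ) • ∑ i ∈ Finset.univ.erase k, W i) *ᵥ h k)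
        = c k - ((γ k : ℝ) : ℂ) * q k := by
      rw [sub_mulVec, dotProduct_sub, smul_mulVec, dotProduct_smul, smul_eq_mul]
    rw [← e]; exact hSINR k
  have hγq_nonneg : ∀ k, 0 ≤ ((γ k : ℝ) : ℂ) * q k := fun k =>
    mul_nonneg (Complex.zero_le_real.mpr (hγ k).le) (hq_nonneg k)
  have hc_pos : ∀ k, 0 < c k := by
    intro k
    have h1 : (0 : ℂ) < ((γ k * σsq k : ℝ) : ℂ) :=
      Complex.zero_lt_real.mpr (mul_pos (hγ k) (hσ k))
    exact lt_of_lt_of_le h1 ((hSINR' k).trans (sub_le_self _ (hγq_nonneg k)))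
  have hc_nonneg : ∀ k, 0 ≤ c k := fun k => (hc_pos k).le
  have hc_ne : ∀ k, c k ≠ 0 := fun k => (hc_pos k).ne'
  have hstarc : ∀ k, star (c k) = c k := by
    intro k
    have him : (c k).im = 0 := (Complex.nonneg_iff.mp (hc_nonneg k)).2.symm
    exact Complex.ext (by simp) (by simp [him])
  -- PSD facts
  have hWbarPSD : ∀ k, (Wbar k).PosSemidef := by
    intro k; rw [hWbar k]; exact wbar_psd (W k) (hWk k) (h k) (hc_nonneg k)
  have hdiffPSD : ∀ k, (W k - Wbar k).PosSemidef := by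
    intro k; rw [hWbar k]; exact diff_psd (W k) (hWk k) (h k) (hc_nonneg k) (hc_ne k)
  have hWbarSPSD : WbarS.PosSemidef := by
    rw [hWbarS]
    exact hWS.add (psd_sum _ _ fun i _ => hdiffPSD i)
  -- total matrix unchanged
  have hRsum : (∑ k, Wbar k) + WbarS = (∑ k, W k) + WS := by
    rw [hWbarS, Finset.sum_sub_distrib]
    abel
  -- quadratic form values of Wbar
  have hqbar_self : ∀ k, star (h k) ⬝ᵥ (Wbar k *ᵥ h k) = c k := by
    intro k
    rw [hWbar k, quad_eq (W k) (hWk k).1 (h k) (h k), hstarc k]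
    field_simp
    exact mul_div_cancel_left₀ _ (hc_ne k)
  have hqbar_le : ∀ k i, star (h k) ⬝ᵥ (Wbar i *ᵥ h k) ≤ star (h k) ⬝ᵥ (W i *ᵥ h k) := by
    intro k i
    have := (hdiffPSD i).dotProduct_mulVec_nonneg (h k)
    rw [sub_mulVec, dotProduct_sub] at this
    exact sub_nonneg.mp this
  -- SINR for barred variables
  have hSINRbar : ∀ k, ((γ k * σsq k : ℝ) : ℂ) ≤
      star (h k) ⬝ᵥ ((Wbar k - ((γ k : ℝ) : ℂ) • ∑ i ∈ Finset.univ.erase k, Wbar i) *ᵥ h k) := by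
    intro k
    rw [sub_mulVec, dotProduct_sub, smul_mulVec, dotProduct_smul, smul_eq_mul,
      hqbar_self k, sum_mulVec', dotProduct_sum']
    have hsumle : ∑ i ∈ Finset.univ.erase k, star (h k) ⬝ᵥ (Wbar i *ᵥ h k) ≤ q k := by
      rw [hq]
      simp only
      rw [sum_mulVec', dotProduct_sum']
      exact Finset.sum_le_sum fun i _ => hqbar_le k i
    have hmul : ((γ k : ℝ) : ℂ) * ∑ i ∈ Finset.univ.erase k, star (h k) ⬝ᵥ (Wbar i *ᵥ h k)
        ≤ ((γ k : ℝ) : ℂ) * q k :=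
      mul_le_mul_of_nonneg_left hsumle (Complex.zero_le_real.mpr (hγ k).le)
    calc ((γ k * σsq k : ℝ) : ℂ) ≤ c k - ((γ k : ℝ) : ℂ) * q k := hSINR' k
      _ ≤ c k - ((γ k : ℝ) : ℂ) * ∑ i ∈ Finset.univ.erase k, star (h k) ⬝ᵥ (Wbar i *ᵥ h k) :=
        sub_le_sub_left hmul _
  refine ⟨⟨⟨hWbarPSD, hWbarSPSD, by rwa [hRsum], hSINRbar, by rwa [hRsum]⟩,
    fun t' W' WS' hf => hopt2 t' W' WS' hf⟩, fun k => ?_⟩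
  rw [hWbar k]
  exact rank_smul_vecMulVec _ _ _
end

section
/- Assume K ≥ 1. Let (t*, W*_1, …, W*_K, W*_S) be an optimal solution of problem (P2-R) with optimal value t* > 0. Then the power constraint is tight: tr(Σ_{k=1}^K W*_k + W*_S) = P. (Proof idea: feasibility forces tr(R*) > 0; if tr(R*) < P, scaling the whole solution by c = P/tr(R*) > 1 gives a feasible tuple with objective c·t* > t*, contradicting optimality.) -/
open Matrix ComplexOrder

variable {n : ℕ}


lemma dot_sumC {ι : Type*} (s : Finset ι) (v : Fin n → ℂ) (f : ι → Fin n → ℂ) :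
    v ⬝ᵥ ∑ k ∈ s, f k = ∑ k ∈ s, v ⬝ᵥ f k := by
  classical
  induction s using Finset.induction with
  | empty => simp
  | insert _ _ hx ih => rw [Finset.sum_insert hx, Finset.sum_insert hx, dotProduct_add, ih]

lemma mulVec_sumC {ι : Type*} (s : Finset ι) (W : ι → Matrix (Fin n) (Fin n) ℂ) (x : Fin n → ℂ) :
    (∑ k ∈ s, W k) *ᵥ x = ∑ k ∈ s, W k *ᵥ x := by
  classical
  induction s using Finset.induction with
  | empty => simp
  | insert _ _ hx ih => rw [Finset.sum_insert hx, Finset.sum_insert hx, add_mulVec, ih]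

lemma psd_smul' {M : Matrix (Fin n) (Fin n) ℂ} (hM : M.PosSemidef) {c : ℝ} (hc : 0 ≤ c) :
    ((c : ℂ) • M).PosSemidef := by
  rw [posSemidef_iff_dotProduct_mulVec]
  constructor
  · unfold Matrix.IsHermitian
    rw [conjTranspose_smul, hM.1]
    congr 1
    simp [Complex.star_def, Complex.conj_ofReal]
  · intro x
    rw [smul_mulVec, dotProduct_smul, smul_eq_mul]
    exact mul_nonneg (by exact_mod_cast hc) (hM.dotProduct_mulVec_nonneg x)

lemma psd_sum' {K : ℕ} {W : Fin K → Matrix (Fin n) (Fin n) ℂ} (hW : ∀ k, (W k).PosSemidef) :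
    (∑ k, W k).PosSemidef := by
  rw [posSemidef_iff_dotProduct_mulVec]
  constructor
  · unfold Matrix.IsHermitian
    rw [conjTranspose_sum]
    exact Finset.sum_congr rfl fun k _ => (hW k).1
  · intro x
    rw [mulVec_sumC, dot_sumC]
    exact Finset.sum_nonneg fun k _ => (hW k).dotProduct_mulVec_nonneg x

lemma psd_add' {M N : Matrix (Fin n) (Fin n) ℂ} (hM : M.PosSemidef) (hN : N.PosSemidef) :
    (M + N).PosSemidef := by
  rw [posSemidef_iff_dotProduct_mulVec]
  constructor
  · unfold Matrix.IsHermitian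
    rw [conjTranspose_add, hM.1, hN.1]
  · intro x
    rw [add_mulVec, dotProduct_add]
    exact add_nonneg (hM.dotProduct_mulVec_nonneg x) (hN.dotProduct_mulVec_nonneg x)

lemma psd_trace_nonneg' {M : Matrix (Fin n) (Fin n) ℂ} (hM : M.PosSemidef) :
    0 ≤ M.trace := by
  exact hM.trace_nonneg

lemma psd_trace_eq_zero' {M : Matrix (Fin n) (Fin n) ℂ} (hM : M.PosSemidef)
    (h0 : M.trace = 0) : M = 0 := by
  exact hM.trace_eq_zero_iff.mp h0

/-- For `K ≥ 1`, at any optimal solution of (P2-R) with optimal value `t* > 0`,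
the power constraint is tight: `tr(∑_k W*_k + W*_S) = P`. -/
theorem stmt2 {N K : ℕ} (hK : 1 ≤ K) (A1 A2 A3 : Matrix (Fin N) (Fin N) ℂ)
    (hA1 : A1.IsHermitian) (hA3 : A3.IsHermitian)
    (h : Fin K → Fin N → ℂ) (γ σsq : Fin K → ℝ)
    (hγ : ∀ k, 0 < γ k) (hσ : ∀ k, 0 < σsq k) (P : ℝ) (hP : 0 < P)
    (t : ℝ) (ht : 0 < t)
    (W : Fin K → Matrix (Fin N) (Fin N) ℂ) (WS : Matrix (Fin N) (Fin N) ℂ)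
    (hopt : Optimal A1 A2 A3 h γ σsq P t W WS) :
    ((∑ k, W k) + WS).trace = (P : ℂ) := by
  obtain ⟨⟨hW, hWS, hB, hcons, htr⟩, hopt'⟩ := hopt
  set R := (∑ k, W k) + WS with hRdef
  have hRpsd : R.PosSemidef := psd_add' (psd_sum' hW) hWS
  have hRtr : 0 ≤ R.trace := psd_trace_nonneg' hRpsd
  -- the trace is a nonnegative real
  have him : R.trace.im = 0 := by
    have := (Complex.le_def.mp hRtr).2
    simpa using this.symm
  have hre : 0 ≤ R.trace.re := by simpa using (Complex.le_def.mp hRtr).1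
  set r := R.trace.re with hrdef
  have hRr : R.trace = (r : ℂ) := Complex.ext rfl him
  have hrP : r ≤ P := by
    have := (Complex.le_def.mp htr).1
    simpa using this
  -- r > 0
  have hrpos : 0 < r := by
    rcases lt_or_eq_of_le hre with h' | h'
    · exact h'
    -- if trace = 0, every W k = 0, contradicting the SINR constraint
    exfalso
    have htr0 : R.trace = 0 := by rw [hRr, ← h']; simp
    have hsplit : (∑ k, W k).trace + WS.trace = 0 := by
      rw [← trace_add]; exact htr0
    have hsum_nonneg : 0 ≤ (∑ k, W k).trace := psd_trace_nonneg' (psd_sum' hW)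
    have hWS_nonneg : 0 ≤ WS.trace := psd_trace_nonneg' hWS
    have hsum0 : (∑ k, W k).trace = 0 := by
      have h1 : (∑ k, W k).trace ≤ 0 := by
        calc (∑ k, W k).trace = -WS.trace := by linear_combination hsplit
        _ ≤ 0 := by simpa using hWS_nonneg
      exact le_antisymm h1 hsum_nonneg
    have heach : ∀ k ∈ Finset.univ, (W k).trace = 0 := by
      rw [trace_sum] at hsum0
      exact (Finset.sum_eq_zero_iff_of_nonneg
        (fun k _ => psd_trace_nonneg' (hW k))).mp hsum0
    have hW0 : ∀ k, W k = 0 := fun k =>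
      psd_trace_eq_zero' (hW k) (heach k (Finset.mem_univ k))
    obtain ⟨k0⟩ : Nonempty (Fin K) := ⟨⟨0, hK⟩⟩
    have hc := hcons k0
    simp only [hW0, Finset.sum_const_zero, smul_zero, sub_zero, zero_mulVec,
      dotProduct_zero] at hc
    have : γ k0 * σsq k0 ≤ 0 := by exact_mod_cast hc
    exact absurd this (not_le.mpr (mul_pos (hγ k0) (hσ k0)))
  -- suppose r < P : scale by c = P / r > 1 to contradict optimality
  rcases lt_or_eq_of_le hrP with hlt | heq
  · exfalso
    set c := P / r with hcdef
    have hc1 : 1 < c := (one_lt_div hrpos).mpr hlt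
    have hc0 : 0 ≤ c := le_of_lt (lt_trans one_pos hc1)
    have hfeas : Feasible A1 A2 A3 h γ σsq P (c * t)
        (fun k => (c : ℂ) • W k) ((c : ℂ) • WS) := by
      have hsumscale : (∑ k, (c : ℂ) • W k) + (c : ℂ) • WS = (c : ℂ) • R := by
        rw [hRdef, smul_add, Finset.smul_sum]
      refine ⟨fun k => psd_smul' (hW k) hc0, psd_smul' hWS hc0, ?_, ?_, ?_⟩
      · rw [hsumscale]
        have hBmat : Bmat A1 A2 A3 (c * t) ((c : ℂ) • R)
            = (c : ℂ) • Bmat A1 A2 A3 t R := by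
          ext i j
          fin_cases i <;> fin_cases j <;>
            simp [Bmat, Matrix.mul_smul, Matrix.trace_smul, smul_eq_mul] <;>
            push_cast <;> ring
        rw [hBmat]
        exact psd_smul' hB hc0
      · intro k
        have hmat : ((c : ℂ) • W k - ((γ k : ℝ) : ℂ) •
              ∑ i ∈ Finset.univ.erase k, (c : ℂ) • W i)
            = (c : ℂ) • (W k - ((γ k : ℝ) : ℂ) • ∑ i ∈ Finset.univ.erase k, W i) := by
          rw [smul_sub, ← Finset.smul_sum, smul_comm]
        rw [hmat, smul_mulVec, dotProduct_smul, smul_eq_mul]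
        set v := star (h k) ⬝ᵥ ((W k - ((γ k : ℝ) : ℂ) •
          ∑ i ∈ Finset.univ.erase k, W i) *ᵥ h k) with hvdef
        have hv := hcons k
        have hv0 : (0 : ℂ) ≤ v :=
          le_trans (by exact_mod_cast le_of_lt (mul_pos (hγ k) (hσ k))) hv
        calc ((γ k * σsq k : ℝ) : ℂ) ≤ v := hv
          _ = 1 * v := (one_mul v).symm
          _ ≤ (c : ℂ) * v := mul_le_mul_of_nonneg_right (by exact_mod_cast le_of_lt hc1) hv0
      · rw [hsumscale, trace_smul, hRr, smul_eq_mul]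
        rw [show ((c : ℂ) * (r : ℂ)) = ((c * r : ℝ) : ℂ) by push_cast; ring]
        rw [hcdef, div_mul_cancel₀ P (ne_of_gt hrpos)]
    have := hopt' (c * t) _ _ hfeas
    have : c * t ≤ 1 * t := by simpa using this
    have := le_of_mul_le_mul_right this ht
    exact absurd this (not_le.mpr hc1)
  · rw [hRr, heq]
end

section
/- Fix k ∈ {1, …, K}. Let W_1, …, W_K and W̄_1, …, W̄_K be Hermitian matrices in ℂ^{N×N}, let h ∈ ℂ^N, γ > 0, σ² > 0. Suppose: (a) Σ_{i=1}^K (W_i − W̄_i) is positive semidefinite; (b) hᴴ W̄_k h = hᴴ W_k h; (c) hᴴ (W_k − γ Σ_{i≠k} W_i) h ≥ γ σ². Then hᴴ (W̄_k − γ Σ_{i≠k} W̄_i) h ≥ γ σ². -/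
open Matrix ComplexOrder

/-- Preservation of the SINR constraint: if `∑_i (W_i − W̄_i)` is PSD, the quadratic
forms of `W_k` and `W̄_k` at `h` coincide, and `hᴴ(W_k − γ ∑_{i≠k} W_i)h ≥ γσ²`, then
`hᴴ(W̄_k − γ ∑_{i≠k} W̄_i)h ≥ γσ²`. -/
theorem stmt4 {N K : ℕ} (k : Fin K)
    (W Wbar : Fin K → Matrix (Fin N) (Fin N) ℂ)
    (hW : ∀ i, (W i).IsHermitian) (hWbar : ∀ i, (Wbar i).IsHermitian)
    (h : Fin N → ℂ) (γ σsq : ℝ) (hγ : 0 < γ) (hσ : 0 < σsq)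
    (ha : (∑ i, (W i - Wbar i)).PosSemidef)
    (hb : star h ⬝ᵥ (Wbar k *ᵥ h) = star h ⬝ᵥ (W k *ᵥ h))
    (hc : ((γ * σsq : ℝ) : ℂ) ≤
      star h ⬝ᵥ ((W k - (γ : ℂ) • ∑ i ∈ Finset.univ.erase k, W i) *ᵥ h)) :
    ((γ * σsq : ℝ) : ℂ) ≤
      star h ⬝ᵥ ((Wbar k - (γ : ℂ) • ∑ i ∈ Finset.univ.erase k, Wbar i) *ᵥ h) := by
  set A := ∑ i ∈ Finset.univ.erase k, W i with hA
  set B := ∑ i ∈ Finset.univ.erase k, Wbar i with hB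
  set q : Matrix (Fin N) (Fin N) ℂ → ℂ := fun M => star h ⬝ᵥ (M *ᵥ h) with hq
  have qadd : ∀ M M', q (M + M') = q M + q M' := by
    intro M M'
    simp [hq, add_mulVec, dotProduct_add]
  have qsub : ∀ M M', q (M - M') = q M - q M' := by
    intro M M'
    simp [hq, sub_mulVec, dotProduct_sub]
  have hsum : (∑ i, (W i - Wbar i)) = (W k - Wbar k) + (A - B) := by
    rw [Finset.sum_sub_distrib, hA, hB]
    have h1 : (∑ i, W i) = W k + A := by
      rw [hA, ← Finset.add_sum_erase _ W (Finset.mem_univ k)]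
    have h2 : (∑ i, Wbar i) = Wbar k + B := by
      rw [hB, ← Finset.add_sum_erase _ Wbar (Finset.mem_univ k)]
    rw [h1, h2]; abel
  have hpos : 0 ≤ q (∑ i, (W i - Wbar i)) := ha.dotProduct_mulVec_nonneg h
  rw [hsum, qadd, qsub, qsub] at hpos
  have hbb : q (Wbar k) = q (W k) := hb
  have hBA : q B ≤ q A := by
    rw [hbb] at hpos
    simpa using hpos
  have hmul : (γ : ℂ) * q B ≤ (γ : ℂ) * q A :=
    mul_le_mul_of_nonneg_left hBA (by positivity)
  have expand : ∀ (M : Matrix (Fin N) (Fin N) ℂ) (S : Matrix (Fin N) (Fin N) ℂ),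
      star h ⬝ᵥ ((M - (γ : ℂ) • S) *ᵥ h) = q M - (γ : ℂ) * q S := by
    intro M S
    simp [hq, sub_mulVec, dotProduct_sub, smul_mulVec, dotProduct_smul, smul_eq_mul]
  rw [expand] at hc ⊢
  rw [hbb]
  calc ((γ * σsq : ℝ) : ℂ) ≤ q (W k) - (γ : ℂ) * q A := hc
    _ ≤ q (W k) - (γ : ℂ) * q B := by exact sub_le_sub_left hmul _
end
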